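/- Double bracketing with the Hamiltonian equals bracketing with the quadratic Hamiltonian: for all x ∈ A^M, {h^M, {h^M, x}} = {h^M_2, x}. -/

import Mathlib

open MvPolynomial

/-- Raw generator names for the middle algebra. -/
inductive MGenRaw (n : ℕ) : Type
  | aL (i j : Fin n) : MGenRaw n
  | aR (i j : Fin n) : MGenRaw n
  | bL (i j : Fin n) : MGenRaw n
  | bR (i j : Fin n) : MGenRaw n

/-- Validity of a raw generator name, given the two pairings. -/
def MGenValid {n : ℕ} (sL sR : Equiv.Perm (Fin n)) : MGenRaw n → Prop
  | .aL i j => i < j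
  | .aR i j => i < j
  | .bL i j => i < j ∧ sL i = j
  | .bR i j => i < j ∧ sR i = j

/-- Generators of the middle algebra `A^M`. -/
def MGen (n : ℕ) (sL sR : Equiv.Perm (Fin n)) : Type :=
  {g : MGenRaw n // MGenValid sL sR g}

/-- The middle algebra `A^M`: the free commutative unital `𝔽₂`-algebra on the generators. -/
abbrev AM (n : ℕ) (sL sR : Equiv.Perm (Fin n)) : Type :=
  MvPolynomial (MGen n sL sR) (ZMod 2)

/-- The generator `α^L_{ij}` (or `0` if `¬ i < j`). -/
noncomputable def genAL {n : ℕ} (sL sR : Equiv.Perm (Fin n)) (i j : Fin n) : AM n sL sR :=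
  if h : i < j then X (⟨MGenRaw.aL i j, h⟩ : MGen n sL sR) else 0

/-- The generator `α^R_{ij}` (or `0` if `¬ i < j`). -/
noncomputable def genAR {n : ℕ} (sL sR : Equiv.Perm (Fin n)) (i j : Fin n) : AM n sL sR :=
  if h : i < j then X (⟨MGenRaw.aR i j, h⟩ : MGen n sL sR) else 0

/-- The generator `β^L_{ij}` (or `0` if invalid). -/
noncomputable def genBL {n : ℕ} (sL sR : Equiv.Perm (Fin n)) (i j : Fin n) : AM n sL sR :=
  if h : i < j ∧ sL i = j then X (⟨MGenRaw.bL i j, h⟩ : MGen n sL sR) else 0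

/-- The generator `β^R_{ij}` (or `0` if invalid). -/
noncomputable def genBR {n : ℕ} (sL sR : Equiv.Perm (Fin n)) (i j : Fin n) : AM n sL sR :=
  if h : i < j ∧ sR i = j then X (⟨MGenRaw.bR i j, h⟩ : MGen n sL sR) else 0

/-- The path `1, β^R(1), β^L(β^R(1)), …` (with `1` rendered as `0 : Fin n`). -/
def pathSeq {n : ℕ} [NeZero n] (sL sR : Equiv.Perm (Fin n)) : ℕ → Fin n
  | 0 => 0
  | k + 1 => if k % 2 = 0 then sR (pathSeq sL sR k) else sL (pathSeq sL sR k)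

/-- The β-generator traversed at step `k` of the path (indices in increasing order). -/
noncomputable def stepGen {n : ℕ} [NeZero n] (sL sR : Equiv.Perm (Fin n)) (k : ℕ) :
    AM n sL sR :=
  if k % 2 = 0 then
    genBR sL sR (min (pathSeq sL sR k) (pathSeq sL sR (k + 1)))
      (max (pathSeq sL sR k) (pathSeq sL sR (k + 1)))
  else
    genBL sL sR (min (pathSeq sL sR k) (pathSeq sL sR (k + 1)))
      (max (pathSeq sL sR k) (pathSeq sL sR (k + 1)))

/-- `γ_i`: the sum of the β-generators along the path from `1` to the first occurrence of `i`. -/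
noncomputable def gammaEl {n : ℕ} [NeZero n] (sL sR : Equiv.Perm (Fin n))
    (hvisit : ∀ i : Fin n, ∃ m, pathSeq sL sR m = i) (i : Fin n) : AM n sL sR :=
  ∑ k ∈ Finset.range (Nat.find (hvisit i)), stepGen sL sR k

/-- Values of the string differential `δ^M_str` on generators. -/
noncomputable def deltaStrVal {n : ℕ} [NeZero n] (sL sR : Equiv.Perm (Fin n))
    (hvisit : ∀ i : Fin n, ∃ m, pathSeq sL sR m = i) : MGen n sL sR → AM n sL sR :=
  fun g =>
    match g.1 with
    | .aR i j =>
        (gammaEl sL sR hvisit i + gammaEl sL sR hvisit j) * genAR sL sR i j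
          + ∑ k : Fin n, if i < k ∧ k < j then genAR sL sR i k * genAR sL sR k j else 0
    | .aL i j =>
        (gammaEl sL sR hvisit i + gammaEl sL sR hvisit j) * genAL sL sR i j
          + ∑ k : Fin n, if i < k ∧ k < j then genAL sL sR i k * genAL sL sR k j else 0
    | .bR i j => genBR sL sR i j ^ 2
    | .bL i j => genBL sL sR i j ^ 2

/-- The common value of `d^M_SFT` on the β-generators `β^x_{ij}`. -/
noncomputable def betaSFTVal {n : ℕ} (sL sR : Equiv.Perm (Fin n)) (i j : Fin n) : AM n sL sR :=
  (∑ k : Fin n, if k < i then genAL sL sR k i * genAR sL sR k i else 0)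
    + (∑ k : Fin n, if i < k ∧ k ≠ j then genAL sL sR i k * genAR sL sR i k else 0)
    + (∑ k : Fin n, if k < j ∧ k ≠ i then genAL sL sR k j * genAR sL sR k j else 0)
    + (∑ k : Fin n, if j < k then genAL sL sR j k * genAR sL sR j k else 0)

/-- Values of the SFT differential `d^M_SFT` on generators. -/
noncomputable def dSFTVal {n : ℕ} (sL sR : Equiv.Perm (Fin n)) : MGen n sL sR → AM n sL sR :=
  fun g =>
    match g.1 with
    | .aR i j =>
        (∑ k : Fin n, if j < k then genAR sL sR i k * genAL sL sR j k else 0)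
          + (∑ k : Fin n, if k < i then genAR sL sR k j * genAL sL sR k i else 0)
    | .aL i j =>
        (∑ k : Fin n, if j < k then genAL sL sR i k * genAR sL sR j k else 0)
          + (∑ k : Fin n, if k < i then genAL sL sR k j * genAR sL sR k i else 0)
    | .bL i j => betaSFTVal sL sR i j
    | .bR i j => betaSFTVal sL sR i j

/-- The prescribed values of the SFT bracket on pairs of generators. -/
noncomputable def mBrVal {n : ℕ} (sL sR : Equiv.Perm (Fin n)) :
    MGen n sL sR → MGen n sL sR → AM n sL sR :=
  fun g g' =>
    match g.1, g'.1 with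
    | .aL i j, .aL k l =>
        if j = k then genAL sL sR i l else if i = l then genAL sL sR k j else 0
    | .aR i j, .aR k l =>
        if j = k then genAR sL sR i l else if i = l then genAR sL sR k j else 0
    | .aL i j, .bL k l =>
        if Xor (i = k ∨ i = l) (j = k ∨ j = l) then genAL sL sR i j else 0
    | .bL k l, .aL i j =>
        if Xor (i = k ∨ i = l) (j = k ∨ j = l) then genAL sL sR i j else 0
    | .aR i j, .bR k l =>
        if Xor (i = k ∨ i = l) (j = k ∨ j = l) then genAR sL sR i j else 0
    | .bR k l, .aR i j =>
        if Xor (i = k ∨ i = l) (j = k ∨ j = l) then genAR sL sR i j else 0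
    | _, _ => 0

/-- `Br` is *the* SFT bracket: the symmetric `𝔽₂`-bilinear operation on `A^M` satisfying the
Leibniz rule in each variable and taking the prescribed values on generators. -/
def IsSFTBracket {n : ℕ} (sL sR : Equiv.Perm (Fin n))
    (Br : AM n sL sR → AM n sL sR → AM n sL sR) : Prop :=
  (∀ x y, Br x y = Br y x) ∧
    (∀ x y z, Br x (y + z) = Br x y + Br x z) ∧
    (∀ x y z, Br x (y * z) = Br x y * z + y * Br x z) ∧
    (∀ g g' : MGen n sL sR, Br (X g) (X g') = mBrVal sL sR g g')

/-- The Hamiltonian `h^M = Σ_{i<j} α^L_{ij} α^R_{ij}`. -/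
noncomputable def hamM {n : ℕ} (sL sR : Equiv.Perm (Fin n)) : AM n sL sR :=
  ∑ i : Fin n, ∑ j : Fin n, if i < j then genAL sL sR i j * genAR sL sR i j else 0

/-- The quadratic Hamiltonian `h^M_2`. -/
noncomputable def hamM2 {n : ℕ} (sL sR : Equiv.Perm (Fin n)) : AM n sL sR :=
  (∑ i : Fin n, ∑ k : Fin n, ∑ j : Fin n,
      if i < k ∧ k < j then genAR sL sR i k * genAR sL sR k j * genAL sL sR i j else 0)
    + (∑ i : Fin n, ∑ k : Fin n, ∑ j : Fin n,
      if i < k ∧ k < j then genAL sL sR i k * genAL sL sR k j * genAR sL sR i j else 0)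

/-- Maslov weights of generators, given a Maslov potential `μ`. -/
def mWeight {n : ℕ} (sL sR : Equiv.Perm (Fin n)) (μ : Fin n → ℤ) : MGen n sL sR → ℤ :=
  fun g =>
    match g.1 with
    | .aL i j => μ i - μ j - 1
    | .aR i j => μ j - μ i - 1
    | .bL _ _ => -1
    | .bR _ _ => -1


section Toolkit

variable {n : ℕ} {sL sR : Equiv.Perm (Fin n)}
variable {Br : AM n sL sR → AM n sL sR → AM n sL sR}

local notation "A" => genAL sL sR
local notation "B" => genAR sL sR

lemma AM_add_self (x : AM n sL sR) : x + x = 0 := by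
  have : x + x = ((1 : ZMod 2) + 1) • x := by
    rw [add_smul, one_smul]
  rw [this, show (1 : ZMod 2) + 1 = 0 by decide, zero_smul]


lemma X_aL {i j : Fin n} (h : i < j) :
    (X (⟨MGenRaw.aL i j, h⟩ : MGen n sL sR) : AM n sL sR) = A i j := by
  rw [genAL, dif_pos h]

lemma X_aR {i j : Fin n} (h : i < j) :
    (X (⟨MGenRaw.aR i j, h⟩ : MGen n sL sR) : AM n sL sR) = B i j := by
  rw [genAR, dif_pos h]

lemma X_bL {i j : Fin n} (h : i < j ∧ sL i = j) :
    (X (⟨MGenRaw.bL i j, h⟩ : MGen n sL sR) : AM n sL sR) = genBL sL sR i j := by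
  rw [genBL, dif_pos h]

lemma X_bR {i j : Fin n} (h : i < j ∧ sR i = j) :
    (X (⟨MGenRaw.bR i j, h⟩ : MGen n sL sR) : AM n sL sR) = genBR sL sR i j := by
  rw [genBR, dif_pos h]

section BrBasic
variable (hBr : IsSFTBracket sL sR Br)
include hBr

lemma br_comm (x y : AM n sL sR) : Br x y = Br y x := hBr.1 x y

lemma br_addr (x y z : AM n sL sR) : Br x (y + z) = Br x y + Br x z := hBr.2.1 x y z

lemma br_mulr (x y z : AM n sL sR) : Br x (y * z) = Br x y * z + y * Br x z := hBr.2.2.1 x y z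

lemma br_zeror (x : AM n sL sR) : Br x 0 = 0 := by
  have h := br_addr hBr x 0 0
  rw [add_zero] at h
  simpa using h

lemma br_zerol (x : AM n sL sR) : Br 0 x = 0 := by
  rw [br_comm hBr]; exact br_zeror hBr x

lemma br_sumr {ι : Type*} (s : Finset ι) (f : ι → AM n sL sR) (x : AM n sL sR) :
    Br x (∑ i ∈ s, f i) = ∑ i ∈ s, Br x (f i) := by
  classical
  induction s using Finset.induction_on with
  | empty => simpa using br_zeror hBr x
  | insert _ _ hnot ih =>
      rw [Finset.sum_insert hnot, Finset.sum_insert hnot, br_addr hBr, ih]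

lemma br_iter (x : AM n sL sR) (c : Prop) [Decidable c] (y : AM n sL sR) :
    Br x (if c then y else 0) = if c then Br x y else 0 := by
  split_ifs with hc
  · rfl
  · exact br_zeror hBr x


lemma brAA {i j k l : Fin n} (hij : i < j) (hkl : k < l) :
    Br (A i j) (A k l) = (if j = k then A i l else 0) + (if i = l then A k j else 0) := by
  rw [← X_aL (sL := sL) (sR := sR) hij, ← X_aL (sL := sL) (sR := sR) hkl]
  refine (hBr.2.2.2 _ _).trans ?_
  show (if j = k then A i l else if i = l then A k j else 0) = _
  by_cases h1 : j = k
  · have h2 : ¬ i = l := by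
      intro h2
      subst h1; subst h2
      exact absurd (hij.trans hkl) (lt_irrefl _)
    simp [h1, h2]
  · simp [h1]

lemma brBB {i j k l : Fin n} (hij : i < j) (hkl : k < l) :
    Br (B i j) (B k l) = (if j = k then B i l else 0) + (if i = l then B k j else 0) := by
  rw [← X_aR (sL := sL) (sR := sR) hij, ← X_aR (sL := sL) (sR := sR) hkl]
  refine (hBr.2.2.2 _ _).trans ?_
  show (if j = k then B i l else if i = l then B k j else 0) = _
  by_cases h1 : j = k
  · have h2 : ¬ i = l := by
      intro h2
      subst h1; subst h2
      exact absurd (hij.trans hkl) (lt_irrefl _)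
    simp [h1, h2]
  · simp [h1]

lemma brAB {i j k l : Fin n} (hij : i < j) (hkl : k < l) :
    Br (A i j) (B k l) = 0 := by
  rw [← X_aL (sL := sL) (sR := sR) hij, ← X_aR (sL := sL) (sR := sR) hkl]
  refine (hBr.2.2.2 _ _).trans ?_
  rfl

lemma brBA {i j k l : Fin n} (hij : i < j) (hkl : k < l) :
    Br (B i j) (A k l) = 0 := by
  rw [← X_aR (sL := sL) (sR := sR) hij, ← X_aL (sL := sL) (sR := sR) hkl]
  refine (hBr.2.2.2 _ _).trans ?_
  rfl

lemma br_bL_A {k l i j : Fin n} (hkl : k < l ∧ sL k = l) (hij : i < j) :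
    Br (genBL sL sR k l) (A i j) =
      if Xor (i = k ∨ i = l) (j = k ∨ j = l) then A i j else 0 := by
  rw [← X_bL (sL := sL) (sR := sR) hkl, ← X_aL (sL := sL) (sR := sR) hij]
  refine (hBr.2.2.2 _ _).trans ?_
  show (if Xor (i = k ∨ i = l) (j = k ∨ j = l) then A i j else 0) = _
  rw [X_aL (sL := sL) (sR := sR) hij]

lemma br_bL_B {k l i j : Fin n} (hkl : k < l ∧ sL k = l) (hij : i < j) :
    Br (genBL sL sR k l) (B i j) = 0 := by
  rw [← X_bL (sL := sL) (sR := sR) hkl, ← X_aR (sL := sL) (sR := sR) hij]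
  refine (hBr.2.2.2 _ _).trans ?_
  rfl

lemma br_bR_B {k l i j : Fin n} (hkl : k < l ∧ sR k = l) (hij : i < j) :
    Br (genBR sL sR k l) (B i j) =
      if Xor (i = k ∨ i = l) (j = k ∨ j = l) then B i j else 0 := by
  rw [← X_bR (sL := sL) (sR := sR) hkl, ← X_aR (sL := sL) (sR := sR) hij]
  refine (hBr.2.2.2 _ _).trans ?_
  show (if Xor (i = k ∨ i = l) (j = k ∨ j = l) then B i j else 0) = _
  rw [X_aR (sL := sL) (sR := sR) hij]

lemma br_bR_A {k l i j : Fin n} (hkl : k < l ∧ sR k = l) (hij : i < j) :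
    Br (genBR sL sR k l) (A i j) = 0 := by
  rw [← X_bR (sL := sL) (sR := sR) hkl, ← X_aL (sL := sL) (sR := sR) hij]
  refine (hBr.2.2.2 _ _).trans ?_
  rfl

end BrBasic

lemma sum_delta₁ {M : Type*} [AddCommMonoid M] (q : Fin n) (P : Fin n → Prop)
    [DecidablePred P] (f : Fin n → M) :
    (∑ i : Fin n, if q = i ∧ P i then f i else 0) = if P q then f q else 0 := by
  rw [Finset.sum_eq_single q]
  · simp
  · intro b _ hb
    rw [if_neg]
    rintro ⟨h1, -⟩
    exact hb h1.symm
  · simp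

section BrH
variable (hBr : IsSFTBracket sL sR Br)
include hBr

lemma brH_A {p q : Fin n} (hpq : p < q) :
    Br (hamM sL sR) (A p q) =
      (∑ c : Fin n, if c < p then A c q * B c p else 0)
        + (∑ c : Fin n, if q < c then A p c * B q c else 0) := by
  rw [br_comm hBr, hamM, br_sumr hBr]
  have step : ∀ i : Fin n,
      Br (A p q) (∑ j : Fin n, if i < j then A i j * B i j else 0)
        = (∑ j : Fin n, if q = i ∧ i < j then A p j * B i j else 0)
            + (∑ j : Fin n, if p = j ∧ i < j then A i q * B i j else 0) := by
    intro i
    rw [br_sumr hBr, ← Finset.sum_add_distrib]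
    refine Finset.sum_congr rfl fun j _ => ?_
    rw [br_iter hBr]
    by_cases hij : i < j
    · rw [if_pos hij, br_mulr hBr, brAA hBr hpq hij, brAB hBr hpq hij]
      by_cases h1 : q = i <;> by_cases h2 : p = j <;> simp [h1, h2, hij] <;> ring
    · simp [hij]
  simp only [step]
  rw [Finset.sum_add_distrib, Finset.sum_comm]
  rw [Finset.sum_congr rfl fun j _ => sum_delta₁ q (fun i => i < j) (fun i => A p j * B i j)]
  rw [Finset.sum_congr rfl fun i _ => sum_delta₁ p (fun j => i < j) (fun j => A i q * B i j)]
  rw [add_comm]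

lemma brH_B {p q : Fin n} (hpq : p < q) :
    Br (hamM sL sR) (B p q) =
      (∑ c : Fin n, if c < p then B c q * A c p else 0)
        + (∑ c : Fin n, if q < c then B p c * A q c else 0) := by
  rw [br_comm hBr, hamM, br_sumr hBr]
  have step : ∀ i : Fin n,
      Br (B p q) (∑ j : Fin n, if i < j then A i j * B i j else 0)
        = (∑ j : Fin n, if q = i ∧ i < j then B p j * A i j else 0)
            + (∑ j : Fin n, if p = j ∧ i < j then B i q * A i j else 0) := by
    intro i
    rw [br_sumr hBr, ← Finset.sum_add_distrib]
    refine Finset.sum_congr rfl fun j _ => ?_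
    rw [br_iter hBr]
    by_cases hij : i < j
    · rw [if_pos hij, br_mulr hBr, brBB hBr hpq hij, brBA hBr hpq hij]
      by_cases h1 : q = i <;> by_cases h2 : p = j <;> simp [h1, h2, hij] <;> ring
    · simp [hij]
  simp only [step]
  rw [Finset.sum_add_distrib, Finset.sum_comm]
  rw [Finset.sum_congr rfl fun j _ => sum_delta₁ q (fun i => i < j) (fun i => B p j * A i j)]
  rw [Finset.sum_congr rfl fun i _ => sum_delta₁ p (fun j => i < j) (fun j => B i q * A i j)]
  rw [add_comm]

lemma brH_bL {p q : Fin n} (hpq : p < q ∧ sL p = q) :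
    Br (hamM sL sR) (genBL sL sR p q) =
      ∑ i : Fin n, ∑ j : Fin n,
        if (i < j) ∧ Xor (i = p ∨ i = q) (j = p ∨ j = q) then A i j * B i j else 0 := by
  rw [br_comm hBr, hamM, br_sumr hBr]
  refine Finset.sum_congr rfl fun i _ => ?_
  rw [br_sumr hBr]
  refine Finset.sum_congr rfl fun j _ => ?_
  rw [br_iter hBr]
  by_cases hij : i < j
  · rw [if_pos hij, br_mulr hBr, br_bL_A hBr hpq hij, br_bL_B hBr hpq hij,
      mul_zero, add_zero, ite_mul, zero_mul]
    by_cases hx : Xor (i = p ∨ i = q) (j = p ∨ j = q) <;> simp [hx, hij]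
  · simp [hij]

lemma brH_bR {p q : Fin n} (hpq : p < q ∧ sR p = q) :
    Br (hamM sL sR) (genBR sL sR p q) =
      ∑ i : Fin n, ∑ j : Fin n,
        if (i < j) ∧ Xor (i = p ∨ i = q) (j = p ∨ j = q) then A i j * B i j else 0 := by
  rw [br_comm hBr, hamM, br_sumr hBr]
  refine Finset.sum_congr rfl fun i _ => ?_
  rw [br_sumr hBr]
  refine Finset.sum_congr rfl fun j _ => ?_
  rw [br_iter hBr]
  by_cases hij : i < j
  · rw [if_pos hij, br_mulr hBr, br_bR_B hBr hpq hij, br_bR_A hBr hpq hij,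
      zero_mul, zero_add, mul_ite, mul_zero]
    by_cases hx : Xor (i = p ∨ i = q) (j = p ∨ j = q) <;> simp [hx, hij] <;> ring
  · simp [hij]

end BrH

lemma sum_rot {M ι : Type*} [AddCommMonoid M] [Fintype ι] (f : ι → ι → ι → M) :
    ∑ a, ∑ b, ∑ c, f a b c = ∑ b, ∑ c, ∑ a, f a b c := by
  rw [Finset.sum_comm]
  exact Finset.sum_congr rfl fun b _ => Finset.sum_comm

lemma sum_swap23 {M ι : Type*} [AddCommMonoid M] [Fintype ι] (f : ι → ι → ι → M) :
    ∑ a, ∑ b, ∑ c, f a b c = ∑ a, ∑ c, ∑ b, f a b c :=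
  Finset.sum_congr rfl fun _ _ => Finset.sum_comm

section CaseB
variable (hBr : IsSFTBracket sL sR Br)
include hBr

lemma LHS_B {p q : Fin n} (hpq : p < q) :
    Br (hamM sL sR) (Br (hamM sL sR) (B p q)) =
      ∑ a : Fin n, ∑ d : Fin n,
        ((if a < p ∧ d < a then B d q * A d a * A a p else 0)
        + (if a < p ∧ q < d then B a d * A q d * A a p else 0)
        + (if a < p ∧ d < a then B a q * (A d p * B d a) else 0)
        + (if a < p ∧ p < d then B a q * (A a d * B p d) else 0)
        + (if q < a ∧ d < p then B d a * A d p * A q a else 0)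
        + (if q < a ∧ a < d then B p d * A a d * A q a else 0)
        + (if q < a ∧ d < q then B p a * (A d a * B d q) else 0)
        + (if q < a ∧ a < d then B p a * (A q d * B a d) else 0)) := by
  rw [brH_B hBr hpq, br_addr hBr, br_sumr hBr, br_sumr hBr, ← Finset.sum_add_distrib]
  refine Finset.sum_congr rfl fun a _ => ?_
  rw [br_iter hBr, br_iter hBr]
  by_cases ha1 : a < p <;> by_cases ha2 : q < a
  · exact absurd ((ha1.trans hpq).trans ha2) (lt_irrefl a)
  · rw [if_pos ha1, if_neg ha2, add_zero, br_mulr hBr,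
      brH_B hBr (ha1.trans hpq), brH_A hBr ha1]
    simp only [Finset.sum_mul, Finset.mul_sum, add_mul, mul_add,
      ← Finset.sum_add_distrib]
    refine Finset.sum_congr rfl fun d _ => ?_
    simp only [ha1, ha2, true_and, false_and, if_false, add_zero, ite_mul, zero_mul,
      mul_ite, mul_zero, if_true]
    split_ifs <;> ring
  · rw [if_neg ha1, if_pos ha2, zero_add, br_mulr hBr,
      brH_B hBr (hpq.trans ha2), brH_A hBr ha2]
    simp only [Finset.sum_mul, Finset.mul_sum, add_mul, mul_add,
      ← Finset.sum_add_distrib]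
    refine Finset.sum_congr rfl fun d _ => ?_
    simp only [ha1, ha2, true_and, false_and, if_false, zero_add, ite_mul, zero_mul,
      mul_ite, mul_zero, if_true]
    split_ifs <;> ring
  · rw [if_neg ha1, if_neg ha2, add_zero]
    symm
    refine Finset.sum_eq_zero fun d _ => ?_
    simp [ha1, ha2]

lemma RHS_B {p q : Fin n} (hpq : p < q) :
    Br (hamM2 sL sR) (B p q) =
      ∑ a : Fin n, ∑ d : Fin n,
        ((if a < p ∧ p < d then B a q * B p d * A a d else 0)
        + (if q < a ∧ a < d then B p a * B a d * A q d else 0)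
        + (if d < a ∧ a < p then B d a * B a q * A d p else 0)
        + (if d < q ∧ q < a then B d q * B p a * A d a else 0)
        + (if d < a ∧ a < p then A d a * A a p * B d q else 0)
        + (if q < a ∧ a < d then A q a * A a d * B p d else 0)) := by
  rw [br_comm hBr, hamM2, br_addr hBr]
  have e1 : Br (B p q) (∑ i : Fin n, ∑ k : Fin n, ∑ j : Fin n,
      if i < k ∧ k < j then B i k * B k j * A i j else 0)
      = ∑ i : Fin n, ∑ k : Fin n, ∑ j : Fin n,
        ((if q = i ∧ (i < k ∧ k < j) then B p k * B k j * A i j else 0)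
        + (if p = k ∧ (i < k ∧ k < j) then B i q * B k j * A i j else 0)
        + (if q = k ∧ (i < k ∧ k < j) then B i k * B p j * A i j else 0)
        + (if p = j ∧ (i < k ∧ k < j) then B i k * B k q * A i j else 0)) := by
    rw [br_sumr hBr]
    refine Finset.sum_congr rfl fun i _ => ?_
    rw [br_sumr hBr]
    refine Finset.sum_congr rfl fun k _ => ?_
    rw [br_sumr hBr]
    refine Finset.sum_congr rfl fun j _ => ?_
    rw [br_iter hBr]
    by_cases h : i < k ∧ k < j
    · rw [if_pos h, br_mulr hBr, br_mulr hBr, brBB hBr hpq h.1, brBB hBr hpq h.2,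
        brBA hBr hpq (h.1.trans h.2)]
      simp only [h, and_true]
      split_ifs <;> ring
    · simp [h]
  have e2 : Br (B p q) (∑ i : Fin n, ∑ k : Fin n, ∑ j : Fin n,
      if i < k ∧ k < j then A i k * A k j * B i j else 0)
      = ∑ i : Fin n, ∑ k : Fin n, ∑ j : Fin n,
        ((if q = i ∧ (i < k ∧ k < j) then A i k * A k j * B p j else 0)
        + (if p = j ∧ (i < k ∧ k < j) then A i k * A k j * B i q else 0)) := by
    rw [br_sumr hBr]
    refine Finset.sum_congr rfl fun i _ => ?_
    rw [br_sumr hBr]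
    refine Finset.sum_congr rfl fun k _ => ?_
    rw [br_sumr hBr]
    refine Finset.sum_congr rfl fun j _ => ?_
    rw [br_iter hBr]
    by_cases h : i < k ∧ k < j
    · rw [if_pos h, br_mulr hBr, br_mulr hBr, brBA hBr hpq h.1, brBA hBr hpq h.2,
        brBB hBr hpq (h.1.trans h.2)]
      simp only [h, and_true]
      split_ifs <;> ring
    · simp [h]
  rw [e1, e2]
  have c1 : (∑ i : Fin n, ∑ k : Fin n, ∑ j : Fin n,
      if q = i ∧ (i < k ∧ k < j) then B p k * B k j * A i j else 0)
      = ∑ a : Fin n, ∑ d : Fin n, if q < a ∧ a < d then B p a * B a d * A q d else 0 := by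
    rw [sum_rot]
    exact Finset.sum_congr rfl fun k _ => Finset.sum_congr rfl fun j _ =>
      sum_delta₁ q (fun i => i < k ∧ k < j) (fun i => B p k * B k j * A i j)
  have c2 : (∑ i : Fin n, ∑ k : Fin n, ∑ j : Fin n,
      if p = k ∧ (i < k ∧ k < j) then B i q * B k j * A i j else 0)
      = ∑ a : Fin n, ∑ d : Fin n, if a < p ∧ p < d then B a q * B p d * A a d else 0 := by
    rw [sum_swap23]
    exact Finset.sum_congr rfl fun i _ => Finset.sum_congr rfl fun j _ =>
      sum_delta₁ p (fun k => i < k ∧ k < j) (fun k => B i q * B k j * A i j)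
  have c3 : (∑ i : Fin n, ∑ k : Fin n, ∑ j : Fin n,
      if q = k ∧ (i < k ∧ k < j) then B i k * B p j * A i j else 0)
      = ∑ a : Fin n, ∑ d : Fin n, if d < q ∧ q < a then B d q * B p a * A d a else 0 := by
    rw [sum_swap23]
    rw [Finset.sum_congr rfl fun i _ => Finset.sum_congr rfl fun j _ =>
      sum_delta₁ q (fun k => i < k ∧ k < j) (fun k => B i k * B p j * A i j)]
    exact Finset.sum_comm
  have c4 : (∑ i : Fin n, ∑ k : Fin n, ∑ j : Fin n,
      if p = j ∧ (i < k ∧ k < j) then B i k * B k q * A i j else 0)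
      = ∑ a : Fin n, ∑ d : Fin n, if d < a ∧ a < p then B d a * B a q * A d p else 0 := by
    rw [Finset.sum_congr rfl fun i _ => Finset.sum_congr rfl fun k _ =>
      sum_delta₁ p (fun j => i < k ∧ k < j) (fun j => B i k * B k q * A i j)]
    exact Finset.sum_comm
  have c5 : (∑ i : Fin n, ∑ k : Fin n, ∑ j : Fin n,
      if q = i ∧ (i < k ∧ k < j) then A i k * A k j * B p j else 0)
      = ∑ a : Fin n, ∑ d : Fin n, if q < a ∧ a < d then A q a * A a d * B p d else 0 := by
    rw [sum_rot]
    exact Finset.sum_congr rfl fun k _ => Finset.sum_congr rfl fun j _ =>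
      sum_delta₁ q (fun i => i < k ∧ k < j) (fun i => A i k * A k j * B p j)
  have c6 : (∑ i : Fin n, ∑ k : Fin n, ∑ j : Fin n,
      if p = j ∧ (i < k ∧ k < j) then A i k * A k j * B i q else 0)
      = ∑ a : Fin n, ∑ d : Fin n, if d < a ∧ a < p then A d a * A a p * B d q else 0 := by
    rw [Finset.sum_congr rfl fun i _ => Finset.sum_congr rfl fun k _ =>
      sum_delta₁ p (fun j => i < k ∧ k < j) (fun j => A i k * A k j * B i q)]
    exact Finset.sum_comm
  simp only [Finset.sum_add_distrib]
  rw [c1, c2, c3, c4, c5, c6]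
  abel

set_option maxHeartbeats 1000000 in
lemma key_B {p q : Fin n} (hpq : p < q) :
    Br (hamM sL sR) (Br (hamM sL sR) (B p q)) = Br (hamM2 sL sR) (B p q) := by
  rw [LHS_B hBr hpq, RHS_B hBr hpq]
  have main : ∀ a d : Fin n,
      ((if a < p ∧ d < a then B d q * A d a * A a p else 0)
        + (if a < p ∧ q < d then B a d * A q d * A a p else 0)
        + (if a < p ∧ d < a then B a q * (A d p * B d a) else 0)
        + (if a < p ∧ p < d then B a q * (A a d * B p d) else 0)
        + (if q < a ∧ d < p then B d a * A d p * A q a else 0)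
        + (if q < a ∧ a < d then B p d * A a d * A q a else 0)
        + (if q < a ∧ d < q then B p a * (A d a * B d q) else 0)
        + (if q < a ∧ a < d then B p a * (A q d * B a d) else 0)) =
      ((if a < p ∧ p < d then B a q * B p d * A a d else 0)
        + (if q < a ∧ a < d then B p a * B a d * A q d else 0)
        + (if d < a ∧ a < p then B d a * B a q * A d p else 0)
        + (if d < q ∧ q < a then B d q * B p a * A d a else 0)
        + (if d < a ∧ a < p then A d a * A a p * B d q else 0)
        + (if q < a ∧ a < d then A q a * A a d * B p d else 0))
      + ((if a < p ∧ q < d then B a d * A q d * A a p else 0)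
        + (if q < a ∧ d < p then B d a * A d p * A q a else 0)) := by
    intro a d
    have h1 : (if a < p ∧ d < a then B d q * A d a * A a p else 0)
        = (if d < a ∧ a < p then A d a * A a p * B d q else 0) :=
      if_congr and_comm (by ring) rfl
    have h3 : (if a < p ∧ d < a then B a q * (A d p * B d a) else 0)
        = (if d < a ∧ a < p then B d a * B a q * A d p else 0) :=
      if_congr and_comm (by ring) rfl
    have h4 : (if a < p ∧ p < d then B a q * (A a d * B p d) else 0)
        = (if a < p ∧ p < d then B a q * B p d * A a d else 0) := by
      split_ifs <;> ring
    have h6 : (if q < a ∧ a < d then B p d * A a d * A q a else 0)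
        = (if q < a ∧ a < d then A q a * A a d * B p d else 0) := by
      split_ifs <;> ring
    have h7 : (if q < a ∧ d < q then B p a * (A d a * B d q) else 0)
        = (if d < q ∧ q < a then B d q * B p a * A d a else 0) :=
      if_congr and_comm (by ring) rfl
    have h8 : (if q < a ∧ a < d then B p a * (A q d * B a d) else 0)
        = (if q < a ∧ a < d then B p a * B a d * A q d else 0) := by
      split_ifs <;> ring
    rw [h1, h3, h4, h6, h7, h8]
    abel
  rw [Finset.sum_congr rfl fun a _ => Finset.sum_congr rfl fun d _ => main a d]
  rw [Finset.sum_congr rfl fun a _ => Finset.sum_add_distrib, Finset.sum_add_distrib]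
  have cancel : (∑ a : Fin n, ∑ d : Fin n,
      ((if a < p ∧ q < d then B a d * A q d * A a p else 0)
        + (if q < a ∧ d < p then B d a * A d p * A q a else 0))) = 0 := by
    rw [Finset.sum_congr rfl fun a _ => Finset.sum_add_distrib, Finset.sum_add_distrib]
    have flip : (∑ a : Fin n, ∑ d : Fin n,
        if q < a ∧ d < p then B d a * A d p * A q a else 0)
        = ∑ a : Fin n, ∑ d : Fin n,
            if a < p ∧ q < d then B a d * A q d * A a p else 0 := by
      rw [Finset.sum_comm]
      exact Finset.sum_congr rfl fun a _ => Finset.sum_congr rfl fun d _ =>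
        if_congr and_comm (by ring) rfl
    rw [flip, AM_add_self]
  rw [cancel, add_zero]

end CaseB

section CaseA
variable (hBr : IsSFTBracket sL sR Br)
include hBr

lemma LHS_A {p q : Fin n} (hpq : p < q) :
    Br (hamM sL sR) (Br (hamM sL sR) (A p q)) =
      ∑ a : Fin n, ∑ d : Fin n,
        ((if a < p ∧ d < a then A d q * B d a * B a p else 0)
        + (if a < p ∧ q < d then A a d * B q d * B a p else 0)
        + (if a < p ∧ d < a then A a q * (B d p * A d a) else 0)
        + (if a < p ∧ p < d then A a q * (B a d * A p d) else 0)
        + (if q < a ∧ d < p then A d a * B d p * B q a else 0)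
        + (if q < a ∧ a < d then A p d * B a d * B q a else 0)
        + (if q < a ∧ d < q then A p a * (B d a * A d q) else 0)
        + (if q < a ∧ a < d then A p a * (B q d * A a d) else 0)) := by
  rw [brH_A hBr hpq, br_addr hBr, br_sumr hBr, br_sumr hBr, ← Finset.sum_add_distrib]
  refine Finset.sum_congr rfl fun a _ => ?_
  rw [br_iter hBr, br_iter hBr]
  by_cases ha1 : a < p <;> by_cases ha2 : q < a
  · exact absurd ((ha1.trans hpq).trans ha2) (lt_irrefl a)
  · rw [if_pos ha1, if_neg ha2, add_zero, br_mulr hBr,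
      brH_A hBr (ha1.trans hpq), brH_B hBr ha1]
    simp only [Finset.sum_mul, Finset.mul_sum, add_mul, mul_add,
      ← Finset.sum_add_distrib]
    refine Finset.sum_congr rfl fun d _ => ?_
    simp only [ha1, ha2, true_and, false_and, if_false, add_zero, ite_mul, zero_mul,
      mul_ite, mul_zero, if_true]
    split_ifs <;> ring
  · rw [if_neg ha1, if_pos ha2, zero_add, br_mulr hBr,
      brH_A hBr (hpq.trans ha2), brH_B hBr ha2]
    simp only [Finset.sum_mul, Finset.mul_sum, add_mul, mul_add,
      ← Finset.sum_add_distrib]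
    refine Finset.sum_congr rfl fun d _ => ?_
    simp only [ha1, ha2, true_and, false_and, if_false, zero_add, ite_mul, zero_mul,
      mul_ite, mul_zero, if_true]
    split_ifs <;> ring
  · rw [if_neg ha1, if_neg ha2, add_zero]
    symm
    refine Finset.sum_eq_zero fun d _ => ?_
    simp [ha1, ha2]

lemma RHS_A {p q : Fin n} (hpq : p < q) :
    Br (hamM2 sL sR) (A p q) =
      ∑ a : Fin n, ∑ d : Fin n,
        ((if a < p ∧ p < d then A a q * A p d * B a d else 0)
        + (if q < a ∧ a < d then A p a * A a d * B q d else 0)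
        + (if d < a ∧ a < p then A d a * A a q * B d p else 0)
        + (if d < q ∧ q < a then A d q * A p a * B d a else 0)
        + (if d < a ∧ a < p then B d a * B a p * A d q else 0)
        + (if q < a ∧ a < d then B q a * B a d * A p d else 0)) := by
  rw [br_comm hBr, hamM2, br_addr hBr]
  have e1 : Br (A p q) (∑ i : Fin n, ∑ k : Fin n, ∑ j : Fin n,
      if i < k ∧ k < j then A i k * A k j * B i j else 0)
      = ∑ i : Fin n, ∑ k : Fin n, ∑ j : Fin n,
        ((if q = i ∧ (i < k ∧ k < j) then A p k * A k j * B i j else 0)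
        + (if p = k ∧ (i < k ∧ k < j) then A i q * A k j * B i j else 0)
        + (if q = k ∧ (i < k ∧ k < j) then A i k * A p j * B i j else 0)
        + (if p = j ∧ (i < k ∧ k < j) then A i k * A k q * B i j else 0)) := by
    rw [br_sumr hBr]
    refine Finset.sum_congr rfl fun i _ => ?_
    rw [br_sumr hBr]
    refine Finset.sum_congr rfl fun k _ => ?_
    rw [br_sumr hBr]
    refine Finset.sum_congr rfl fun j _ => ?_
    rw [br_iter hBr]
    by_cases h : i < k ∧ k < j
    · rw [if_pos h, br_mulr hBr, br_mulr hBr, brAA hBr hpq h.1, brAA hBr hpq h.2,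
        brAB hBr hpq (h.1.trans h.2)]
      simp only [h, and_true]
      split_ifs <;> ring
    · simp [h]
  have e2 : Br (A p q) (∑ i : Fin n, ∑ k : Fin n, ∑ j : Fin n,
      if i < k ∧ k < j then B i k * B k j * A i j else 0)
      = ∑ i : Fin n, ∑ k : Fin n, ∑ j : Fin n,
        ((if q = i ∧ (i < k ∧ k < j) then B i k * B k j * A p j else 0)
        + (if p = j ∧ (i < k ∧ k < j) then B i k * B k j * A i q else 0)) := by
    rw [br_sumr hBr]
    refine Finset.sum_congr rfl fun i _ => ?_
    rw [br_sumr hBr]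
    refine Finset.sum_congr rfl fun k _ => ?_
    rw [br_sumr hBr]
    refine Finset.sum_congr rfl fun j _ => ?_
    rw [br_iter hBr]
    by_cases h : i < k ∧ k < j
    · rw [if_pos h, br_mulr hBr, br_mulr hBr, brAB hBr hpq h.1, brAB hBr hpq h.2,
        brAA hBr hpq (h.1.trans h.2)]
      simp only [h, and_true]
      split_ifs <;> ring
    · simp [h]
  rw [e1, e2]
  have c1 : (∑ i : Fin n, ∑ k : Fin n, ∑ j : Fin n,
      if q = i ∧ (i < k ∧ k < j) then A p k * A k j * B i j else 0)
      = ∑ a : Fin n, ∑ d : Fin n, if q < a ∧ a < d then A p a * A a d * B q d else 0 := by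
    rw [sum_rot]
    exact Finset.sum_congr rfl fun k _ => Finset.sum_congr rfl fun j _ =>
      sum_delta₁ q (fun i => i < k ∧ k < j) (fun i => A p k * A k j * B i j)
  have c2 : (∑ i : Fin n, ∑ k : Fin n, ∑ j : Fin n,
      if p = k ∧ (i < k ∧ k < j) then A i q * A k j * B i j else 0)
      = ∑ a : Fin n, ∑ d : Fin n, if a < p ∧ p < d then A a q * A p d * B a d else 0 := by
    rw [sum_swap23]
    exact Finset.sum_congr rfl fun i _ => Finset.sum_congr rfl fun j _ =>
      sum_delta₁ p (fun k => i < k ∧ k < j) (fun k => A i q * A k j * B i j)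
  have c3 : (∑ i : Fin n, ∑ k : Fin n, ∑ j : Fin n,
      if q = k ∧ (i < k ∧ k < j) then A i k * A p j * B i j else 0)
      = ∑ a : Fin n, ∑ d : Fin n, if d < q ∧ q < a then A d q * A p a * B d a else 0 := by
    rw [sum_swap23]
    rw [Finset.sum_congr rfl fun i _ => Finset.sum_congr rfl fun j _ =>
      sum_delta₁ q (fun k => i < k ∧ k < j) (fun k => A i k * A p j * B i j)]
    exact Finset.sum_comm
  have c4 : (∑ i : Fin n, ∑ k : Fin n, ∑ j : Fin n,
      if p = j ∧ (i < k ∧ k < j) then A i k * A k q * B i j else 0)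
      = ∑ a : Fin n, ∑ d : Fin n, if d < a ∧ a < p then A d a * A a q * B d p else 0 := by
    rw [Finset.sum_congr rfl fun i _ => Finset.sum_congr rfl fun k _ =>
      sum_delta₁ p (fun j => i < k ∧ k < j) (fun j => A i k * A k q * B i j)]
    exact Finset.sum_comm
  have c5 : (∑ i : Fin n, ∑ k : Fin n, ∑ j : Fin n,
      if q = i ∧ (i < k ∧ k < j) then B i k * B k j * A p j else 0)
      = ∑ a : Fin n, ∑ d : Fin n, if q < a ∧ a < d then B q a * B a d * A p d else 0 := by
    rw [sum_rot]
    exact Finset.sum_congr rfl fun k _ => Finset.sum_congr rfl fun j _ =>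
      sum_delta₁ q (fun i => i < k ∧ k < j) (fun i => B i k * B k j * A p j)
  have c6 : (∑ i : Fin n, ∑ k : Fin n, ∑ j : Fin n,
      if p = j ∧ (i < k ∧ k < j) then B i k * B k j * A i q else 0)
      = ∑ a : Fin n, ∑ d : Fin n, if d < a ∧ a < p then B d a * B a p * A d q else 0 := by
    rw [Finset.sum_congr rfl fun i _ => Finset.sum_congr rfl fun k _ =>
      sum_delta₁ p (fun j => i < k ∧ k < j) (fun j => B i k * B k j * A i q)]
    exact Finset.sum_comm
  simp only [Finset.sum_add_distrib]
  rw [c1, c2, c3, c4, c5, c6]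
  abel

set_option maxHeartbeats 1000000 in
lemma key_A {p q : Fin n} (hpq : p < q) :
    Br (hamM sL sR) (Br (hamM sL sR) (A p q)) = Br (hamM2 sL sR) (A p q) := by
  rw [LHS_A hBr hpq, RHS_A hBr hpq]
  have main : ∀ a d : Fin n,
      ((if a < p ∧ d < a then A d q * B d a * B a p else 0)
        + (if a < p ∧ q < d then A a d * B q d * B a p else 0)
        + (if a < p ∧ d < a then A a q * (B d p * A d a) else 0)
        + (if a < p ∧ p < d then A a q * (B a d * A p d) else 0)
        + (if q < a ∧ d < p then A d a * B d p * B q a else 0)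
        + (if q < a ∧ a < d then A p d * B a d * B q a else 0)
        + (if q < a ∧ d < q then A p a * (B d a * A d q) else 0)
        + (if q < a ∧ a < d then A p a * (B q d * A a d) else 0)) =
      ((if a < p ∧ p < d then A a q * A p d * B a d else 0)
        + (if q < a ∧ a < d then A p a * A a d * B q d else 0)
        + (if d < a ∧ a < p then A d a * A a q * B d p else 0)
        + (if d < q ∧ q < a then A d q * A p a * B d a else 0)
        + (if d < a ∧ a < p then B d a * B a p * A d q else 0)
        + (if q < a ∧ a < d then B q a * B a d * A p d else 0))
      + ((if a < p ∧ q < d then A a d * B q d * B a p else 0)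
        + (if q < a ∧ d < p then A d a * B d p * B q a else 0)) := by
    intro a d
    have h1 : (if a < p ∧ d < a then A d q * B d a * B a p else 0)
        = (if d < a ∧ a < p then B d a * B a p * A d q else 0) :=
      if_congr and_comm (by ring) rfl
    have h3 : (if a < p ∧ d < a then A a q * (B d p * A d a) else 0)
        = (if d < a ∧ a < p then A d a * A a q * B d p else 0) :=
      if_congr and_comm (by ring) rfl
    have h4 : (if a < p ∧ p < d then A a q * (B a d * A p d) else 0)
        = (if a < p ∧ p < d then A a q * A p d * B a d else 0) := by
      split_ifs <;> ring
    have h6 : (if q < a ∧ a < d then A p d * B a d * B q a else 0)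
        = (if q < a ∧ a < d then B q a * B a d * A p d else 0) := by
      split_ifs <;> ring
    have h7 : (if q < a ∧ d < q then A p a * (B d a * A d q) else 0)
        = (if d < q ∧ q < a then A d q * A p a * B d a else 0) :=
      if_congr and_comm (by ring) rfl
    have h8 : (if q < a ∧ a < d then A p a * (B q d * A a d) else 0)
        = (if q < a ∧ a < d then A p a * A a d * B q d else 0) := by
      split_ifs <;> ring
    rw [h1, h3, h4, h6, h7, h8]
    abel
  rw [Finset.sum_congr rfl fun a _ => Finset.sum_congr rfl fun d _ => main a d]
  rw [Finset.sum_congr rfl fun a _ => Finset.sum_add_distrib, Finset.sum_add_distrib]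
  have cancel : (∑ a : Fin n, ∑ d : Fin n,
      ((if a < p ∧ q < d then A a d * B q d * B a p else 0)
        + (if q < a ∧ d < p then A d a * B d p * B q a else 0))) = 0 := by
    rw [Finset.sum_congr rfl fun a _ => Finset.sum_add_distrib, Finset.sum_add_distrib]
    have flip : (∑ a : Fin n, ∑ d : Fin n,
        if q < a ∧ d < p then A d a * B d p * B q a else 0)
        = ∑ a : Fin n, ∑ d : Fin n,
            if a < p ∧ q < d then A a d * B q d * B a p else 0 := by
      rw [Finset.sum_comm]
      exact Finset.sum_congr rfl fun a _ => Finset.sum_congr rfl fun d _ =>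
        if_congr and_comm (by ring) rfl
    rw [flip, AM_add_self]
  rw [cancel, add_zero]

end CaseA

section CasebL
variable (hBr : IsSFTBracket sL sR Br)
include hBr

lemma LHS_bL {p q : Fin n} (hpq : p < q ∧ sL p = q) :
    Br (hamM sL sR) (Br (hamM sL sR) (genBL sL sR p q)) =
      ∑ i : Fin n, ∑ j : Fin n, ∑ d : Fin n,
        ((if ((i < j) ∧ Xor (i = p ∨ i = q) (j = p ∨ j = q)) ∧ d < i then
            A d j * B d i * B i j else 0)
        + (if ((i < j) ∧ Xor (i = p ∨ i = q) (j = p ∨ j = q)) ∧ j < d then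
            A i d * B j d * B i j else 0)
        + (if ((i < j) ∧ Xor (i = p ∨ i = q) (j = p ∨ j = q)) ∧ d < i then
            A i j * (B d j * A d i) else 0)
        + (if ((i < j) ∧ Xor (i = p ∨ i = q) (j = p ∨ j = q)) ∧ j < d then
            A i j * (B i d * A j d) else 0)) := by
  rw [brH_bL hBr hpq, br_sumr hBr]
  refine Finset.sum_congr rfl fun i _ => ?_
  rw [br_sumr hBr]
  refine Finset.sum_congr rfl fun j _ => ?_
  rw [br_iter hBr]
  by_cases h : (i < j) ∧ Xor (i = p ∨ i = q) (j = p ∨ j = q)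
  · rw [if_pos h, br_mulr hBr, brH_A hBr h.1, brH_B hBr h.1]
    simp only [Finset.sum_mul, Finset.mul_sum, add_mul, mul_add,
      ← Finset.sum_add_distrib]
    refine Finset.sum_congr rfl fun d _ => ?_
    simp only [h, true_and]
    split_ifs <;> ring
  · rw [if_neg h]
    symm
    refine Finset.sum_eq_zero fun d _ => ?_
    simp [h]

lemma RHS_bL {p q : Fin n} (hpq : p < q ∧ sL p = q) :
    Br (hamM2 sL sR) (genBL sL sR p q) =
      ∑ i : Fin n, ∑ k : Fin n, ∑ j : Fin n,
        ((if (i < k ∧ k < j) ∧ Xor (i = p ∨ i = q) (j = p ∨ j = q) then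
            B i k * B k j * A i j else 0)
        + ((if (i < k ∧ k < j) ∧ Xor (i = p ∨ i = q) (k = p ∨ k = q) then
            A i k * A k j * B i j else 0)
          + (if (i < k ∧ k < j) ∧ Xor (k = p ∨ k = q) (j = p ∨ j = q) then
            A i k * A k j * B i j else 0))) := by
  rw [br_comm hBr, hamM2, br_addr hBr]
  have e1 : Br (genBL sL sR p q) (∑ i : Fin n, ∑ k : Fin n, ∑ j : Fin n,
      if i < k ∧ k < j then B i k * B k j * A i j else 0)
      = ∑ i : Fin n, ∑ k : Fin n, ∑ j : Fin n,
        (if (i < k ∧ k < j) ∧ Xor (i = p ∨ i = q) (j = p ∨ j = q) then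
            B i k * B k j * A i j else 0) := by
    rw [br_sumr hBr]
    refine Finset.sum_congr rfl fun i _ => ?_
    rw [br_sumr hBr]
    refine Finset.sum_congr rfl fun k _ => ?_
    rw [br_sumr hBr]
    refine Finset.sum_congr rfl fun j _ => ?_
    rw [br_iter hBr]
    by_cases h : i < k ∧ k < j
    · rw [if_pos h, br_mulr hBr, br_mulr hBr, br_bL_B hBr hpq h.1, br_bL_B hBr hpq h.2,
        br_bL_A hBr hpq (h.1.trans h.2)]
      simp only [h, true_and]
      split_ifs <;> ring
    · simp [h]
  have e2 : Br (genBL sL sR p q) (∑ i : Fin n, ∑ k : Fin n, ∑ j : Fin n,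
      if i < k ∧ k < j then A i k * A k j * B i j else 0)
      = ∑ i : Fin n, ∑ k : Fin n, ∑ j : Fin n,
        ((if (i < k ∧ k < j) ∧ Xor (i = p ∨ i = q) (k = p ∨ k = q) then
            A i k * A k j * B i j else 0)
          + (if (i < k ∧ k < j) ∧ Xor (k = p ∨ k = q) (j = p ∨ j = q) then
            A i k * A k j * B i j else 0)) := by
    rw [br_sumr hBr]
    refine Finset.sum_congr rfl fun i _ => ?_
    rw [br_sumr hBr]
    refine Finset.sum_congr rfl fun k _ => ?_
    rw [br_sumr hBr]
    refine Finset.sum_congr rfl fun j _ => ?_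
    rw [br_iter hBr]
    by_cases h : i < k ∧ k < j
    · rw [if_pos h, br_mulr hBr, br_mulr hBr, br_bL_A hBr hpq h.1, br_bL_A hBr hpq h.2,
        br_bL_B hBr hpq (h.1.trans h.2)]
      simp only [h, true_and]
      split_ifs <;> ring
    · simp [h]
  rw [e1, e2]
  simp only [← Finset.sum_add_distrib]

set_option maxHeartbeats 1000000 in
lemma key_bL {p q : Fin n} (hpq : p < q ∧ sL p = q) :
    Br (hamM sL sR) (Br (hamM sL sR) (genBL sL sR p q))
      = Br (hamM2 sL sR) (genBL sL sR p q) := by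
  rw [LHS_bL hBr hpq, RHS_bL hBr hpq]
  simp only [Finset.sum_add_distrib]
  have r1 : (∑ i : Fin n, ∑ j : Fin n, ∑ d : Fin n,
      if ((i < j) ∧ Xor (i = p ∨ i = q) (j = p ∨ j = q)) ∧ d < i then
        A d j * B d i * B i j else 0)
      = ∑ i : Fin n, ∑ k : Fin n, ∑ j : Fin n,
        if (i < k ∧ k < j) ∧ Xor (k = p ∨ k = q) (j = p ∨ j = q) then
          B i k * B k j * A i j else 0 := by
    rw [Finset.sum_congr rfl fun i _ => Finset.sum_congr rfl fun j _ =>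
      Finset.sum_congr rfl fun d _ =>
        (if_congr (by tauto) (by ring) rfl :
          (if ((i < j) ∧ Xor (i = p ∨ i = q) (j = p ∨ j = q)) ∧ d < i then
            A d j * B d i * B i j else 0)
          = (if (d < i ∧ i < j) ∧ Xor (i = p ∨ i = q) (j = p ∨ j = q) then
            B d i * B i j * A d j else 0))]
    exact (sum_rot fun a b c =>
      if (a < b ∧ b < c) ∧ Xor (b = p ∨ b = q) (c = p ∨ c = q) then
        B a b * B b c * A a c else 0).symm
  have r2 : (∑ i : Fin n, ∑ j : Fin n, ∑ d : Fin n,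
      if ((i < j) ∧ Xor (i = p ∨ i = q) (j = p ∨ j = q)) ∧ j < d then
        A i d * B j d * B i j else 0)
      = ∑ i : Fin n, ∑ k : Fin n, ∑ j : Fin n,
        if (i < k ∧ k < j) ∧ Xor (i = p ∨ i = q) (k = p ∨ k = q) then
          B i k * B k j * A i j else 0 :=
    Finset.sum_congr rfl fun i _ => Finset.sum_congr rfl fun j _ =>
      Finset.sum_congr rfl fun d _ => if_congr (by tauto) (by ring) rfl
  have r3 : (∑ i : Fin n, ∑ j : Fin n, ∑ d : Fin n,
      if ((i < j) ∧ Xor (i = p ∨ i = q) (j = p ∨ j = q)) ∧ d < i then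
        A i j * (B d j * A d i) else 0)
      = ∑ i : Fin n, ∑ k : Fin n, ∑ j : Fin n,
        if (i < k ∧ k < j) ∧ Xor (k = p ∨ k = q) (j = p ∨ j = q) then
          A i k * A k j * B i j else 0 := by
    rw [Finset.sum_congr rfl fun i _ => Finset.sum_congr rfl fun j _ =>
      Finset.sum_congr rfl fun d _ =>
        (if_congr (by tauto) (by ring) rfl :
          (if ((i < j) ∧ Xor (i = p ∨ i = q) (j = p ∨ j = q)) ∧ d < i then
            A i j * (B d j * A d i) else 0)
          = (if (d < i ∧ i < j) ∧ Xor (i = p ∨ i = q) (j = p ∨ j = q) then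
            A d i * A i j * B d j else 0))]
    exact (sum_rot fun a b c =>
      if (a < b ∧ b < c) ∧ Xor (b = p ∨ b = q) (c = p ∨ c = q) then
        A a b * A b c * B a c else 0).symm
  have r4 : (∑ i : Fin n, ∑ j : Fin n, ∑ d : Fin n,
      if ((i < j) ∧ Xor (i = p ∨ i = q) (j = p ∨ j = q)) ∧ j < d then
        A i j * (B i d * A j d) else 0)
      = ∑ i : Fin n, ∑ k : Fin n, ∑ j : Fin n,
        if (i < k ∧ k < j) ∧ Xor (i = p ∨ i = q) (k = p ∨ k = q) then
          A i k * A k j * B i j else 0 :=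
    Finset.sum_congr rfl fun i _ => Finset.sum_congr rfl fun j _ =>
      Finset.sum_congr rfl fun d _ => if_congr (by tauto) (by ring) rfl
  rw [r1, r2, r3, r4]
  have comb : (∑ i : Fin n, ∑ k : Fin n, ∑ j : Fin n,
      if (i < k ∧ k < j) ∧ Xor (k = p ∨ k = q) (j = p ∨ j = q) then
        B i k * B k j * A i j else 0)
      + (∑ i : Fin n, ∑ k : Fin n, ∑ j : Fin n,
      if (i < k ∧ k < j) ∧ Xor (i = p ∨ i = q) (k = p ∨ k = q) then
        B i k * B k j * A i j else 0)
      = ∑ i : Fin n, ∑ k : Fin n, ∑ j : Fin n,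
        if (i < k ∧ k < j) ∧ Xor (i = p ∨ i = q) (j = p ∨ j = q) then
          B i k * B k j * A i j else 0 := by
    simp only [← Finset.sum_add_distrib]
    refine Finset.sum_congr rfl fun i _ => Finset.sum_congr rfl fun k _ =>
      Finset.sum_congr rfl fun j _ => ?_
    by_cases hC : i < k ∧ k < j
    · by_cases h1 : i = p ∨ i = q <;> by_cases h2 : k = p ∨ k = q <;>
        by_cases h3 : j = p ∨ j = q <;>
        simp [Xor, h1, h2, h3, hC, AM_add_self]
    · simp [hC]
  rw [← comb]
  abel

end CasebL

section CasebR
variable (hBr : IsSFTBracket sL sR Br)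
include hBr

lemma LHS_bR {p q : Fin n} (hpq : p < q ∧ sR p = q) :
    Br (hamM sL sR) (Br (hamM sL sR) (genBR sL sR p q)) =
      ∑ i : Fin n, ∑ j : Fin n, ∑ d : Fin n,
        ((if ((i < j) ∧ Xor (i = p ∨ i = q) (j = p ∨ j = q)) ∧ d < i then
            B d j * A d i * A i j else 0)
        + (if ((i < j) ∧ Xor (i = p ∨ i = q) (j = p ∨ j = q)) ∧ j < d then
            B i d * A j d * A i j else 0)
        + (if ((i < j) ∧ Xor (i = p ∨ i = q) (j = p ∨ j = q)) ∧ d < i then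
            B i j * (A d j * B d i) else 0)
        + (if ((i < j) ∧ Xor (i = p ∨ i = q) (j = p ∨ j = q)) ∧ j < d then
            B i j * (A i d * B j d) else 0)) := by
  rw [brH_bR hBr hpq, br_sumr hBr]
  refine Finset.sum_congr rfl fun i _ => ?_
  rw [br_sumr hBr]
  refine Finset.sum_congr rfl fun j _ => ?_
  rw [br_iter hBr]
  by_cases h : (i < j) ∧ Xor (i = p ∨ i = q) (j = p ∨ j = q)
  · rw [if_pos h, br_mulr hBr, brH_B hBr h.1, brH_A hBr h.1]
    simp only [Finset.sum_mul, Finset.mul_sum, add_mul, mul_add,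
      ← Finset.sum_add_distrib]
    refine Finset.sum_congr rfl fun d _ => ?_
    simp only [h, true_and]
    split_ifs <;> ring
  · rw [if_neg h]
    symm
    refine Finset.sum_eq_zero fun d _ => ?_
    simp [h]

lemma RHS_bR {p q : Fin n} (hpq : p < q ∧ sR p = q) :
    Br (hamM2 sL sR) (genBR sL sR p q) =
      ∑ i : Fin n, ∑ k : Fin n, ∑ j : Fin n,
        ((if (i < k ∧ k < j) ∧ Xor (i = p ∨ i = q) (j = p ∨ j = q) then
            A i k * A k j * B i j else 0)
        + ((if (i < k ∧ k < j) ∧ Xor (i = p ∨ i = q) (k = p ∨ k = q) then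
            B i k * B k j * A i j else 0)
          + (if (i < k ∧ k < j) ∧ Xor (k = p ∨ k = q) (j = p ∨ j = q) then
            B i k * B k j * A i j else 0))) := by
  rw [br_comm hBr, hamM2, br_addr hBr]
  have e1 : Br (genBR sL sR p q) (∑ i : Fin n, ∑ k : Fin n, ∑ j : Fin n,
      if i < k ∧ k < j then A i k * A k j * B i j else 0)
      = ∑ i : Fin n, ∑ k : Fin n, ∑ j : Fin n,
        (if (i < k ∧ k < j) ∧ Xor (i = p ∨ i = q) (j = p ∨ j = q) then
            A i k * A k j * B i j else 0) := by
    rw [br_sumr hBr]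
    refine Finset.sum_congr rfl fun i _ => ?_
    rw [br_sumr hBr]
    refine Finset.sum_congr rfl fun k _ => ?_
    rw [br_sumr hBr]
    refine Finset.sum_congr rfl fun j _ => ?_
    rw [br_iter hBr]
    by_cases h : i < k ∧ k < j
    · rw [if_pos h, br_mulr hBr, br_mulr hBr, br_bR_A hBr hpq h.1, br_bR_A hBr hpq h.2,
        br_bR_B hBr hpq (h.1.trans h.2)]
      simp only [h, true_and]
      split_ifs <;> ring
    · simp [h]
  have e2 : Br (genBR sL sR p q) (∑ i : Fin n, ∑ k : Fin n, ∑ j : Fin n,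
      if i < k ∧ k < j then B i k * B k j * A i j else 0)
      = ∑ i : Fin n, ∑ k : Fin n, ∑ j : Fin n,
        ((if (i < k ∧ k < j) ∧ Xor (i = p ∨ i = q) (k = p ∨ k = q) then
            B i k * B k j * A i j else 0)
          + (if (i < k ∧ k < j) ∧ Xor (k = p ∨ k = q) (j = p ∨ j = q) then
            B i k * B k j * A i j else 0)) := by
    rw [br_sumr hBr]
    refine Finset.sum_congr rfl fun i _ => ?_
    rw [br_sumr hBr]
    refine Finset.sum_congr rfl fun k _ => ?_
    rw [br_sumr hBr]
    refine Finset.sum_congr rfl fun j _ => ?_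
    rw [br_iter hBr]
    by_cases h : i < k ∧ k < j
    · rw [if_pos h, br_mulr hBr, br_mulr hBr, br_bR_B hBr hpq h.1, br_bR_B hBr hpq h.2,
        br_bR_A hBr hpq (h.1.trans h.2)]
      simp only [h, true_and]
      split_ifs <;> ring
    · simp [h]
  rw [e1, e2]
  simp only [← Finset.sum_add_distrib]
  exact Finset.sum_congr rfl fun i _ => Finset.sum_congr rfl fun k _ =>
    Finset.sum_congr rfl fun j _ => by abel

set_option maxHeartbeats 1000000 in
lemma key_bR {p q : Fin n} (hpq : p < q ∧ sR p = q) :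
    Br (hamM sL sR) (Br (hamM sL sR) (genBR sL sR p q))
      = Br (hamM2 sL sR) (genBR sL sR p q) := by
  rw [LHS_bR hBr hpq, RHS_bR hBr hpq]
  simp only [Finset.sum_add_distrib]
  have r1 : (∑ i : Fin n, ∑ j : Fin n, ∑ d : Fin n,
      if ((i < j) ∧ Xor (i = p ∨ i = q) (j = p ∨ j = q)) ∧ d < i then
        B d j * A d i * A i j else 0)
      = ∑ i : Fin n, ∑ k : Fin n, ∑ j : Fin n,
        if (i < k ∧ k < j) ∧ Xor (k = p ∨ k = q) (j = p ∨ j = q) then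
          A i k * A k j * B i j else 0 := by
    rw [Finset.sum_congr rfl fun i _ => Finset.sum_congr rfl fun j _ =>
      Finset.sum_congr rfl fun d _ =>
        (if_congr (by tauto) (by ring) rfl :
          (if ((i < j) ∧ Xor (i = p ∨ i = q) (j = p ∨ j = q)) ∧ d < i then
            B d j * A d i * A i j else 0)
          = (if (d < i ∧ i < j) ∧ Xor (i = p ∨ i = q) (j = p ∨ j = q) then
            A d i * A i j * B d j else 0))]
    exact (sum_rot fun a b c =>
      if (a < b ∧ b < c) ∧ Xor (b = p ∨ b = q) (c = p ∨ c = q) then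
        A a b * A b c * B a c else 0).symm
  have r2 : (∑ i : Fin n, ∑ j : Fin n, ∑ d : Fin n,
      if ((i < j) ∧ Xor (i = p ∨ i = q) (j = p ∨ j = q)) ∧ j < d then
        B i d * A j d * A i j else 0)
      = ∑ i : Fin n, ∑ k : Fin n, ∑ j : Fin n,
        if (i < k ∧ k < j) ∧ Xor (i = p ∨ i = q) (k = p ∨ k = q) then
          A i k * A k j * B i j else 0 :=
    Finset.sum_congr rfl fun i _ => Finset.sum_congr rfl fun j _ =>
      Finset.sum_congr rfl fun d _ => if_congr (by tauto) (by ring) rfl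
  have r3 : (∑ i : Fin n, ∑ j : Fin n, ∑ d : Fin n,
      if ((i < j) ∧ Xor (i = p ∨ i = q) (j = p ∨ j = q)) ∧ d < i then
        B i j * (A d j * B d i) else 0)
      = ∑ i : Fin n, ∑ k : Fin n, ∑ j : Fin n,
        if (i < k ∧ k < j) ∧ Xor (k = p ∨ k = q) (j = p ∨ j = q) then
          B i k * B k j * A i j else 0 := by
    rw [Finset.sum_congr rfl fun i _ => Finset.sum_congr rfl fun j _ =>
      Finset.sum_congr rfl fun d _ =>
        (if_congr (by tauto) (by ring) rfl :
          (if ((i < j) ∧ Xor (i = p ∨ i = q) (j = p ∨ j = q)) ∧ d < i then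
            B i j * (A d j * B d i) else 0)
          = (if (d < i ∧ i < j) ∧ Xor (i = p ∨ i = q) (j = p ∨ j = q) then
            B d i * B i j * A d j else 0))]
    exact (sum_rot fun a b c =>
      if (a < b ∧ b < c) ∧ Xor (b = p ∨ b = q) (c = p ∨ c = q) then
        B a b * B b c * A a c else 0).symm
  have r4 : (∑ i : Fin n, ∑ j : Fin n, ∑ d : Fin n,
      if ((i < j) ∧ Xor (i = p ∨ i = q) (j = p ∨ j = q)) ∧ j < d then
        B i j * (A i d * B j d) else 0)
      = ∑ i : Fin n, ∑ k : Fin n, ∑ j : Fin n,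
        if (i < k ∧ k < j) ∧ Xor (i = p ∨ i = q) (k = p ∨ k = q) then
          B i k * B k j * A i j else 0 :=
    Finset.sum_congr rfl fun i _ => Finset.sum_congr rfl fun j _ =>
      Finset.sum_congr rfl fun d _ => if_congr (by tauto) (by ring) rfl
  rw [r1, r2, r3, r4]
  have comb : (∑ i : Fin n, ∑ k : Fin n, ∑ j : Fin n,
      if (i < k ∧ k < j) ∧ Xor (k = p ∨ k = q) (j = p ∨ j = q) then
        A i k * A k j * B i j else 0)
      + (∑ i : Fin n, ∑ k : Fin n, ∑ j : Fin n,
      if (i < k ∧ k < j) ∧ Xor (i = p ∨ i = q) (k = p ∨ k = q) then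
        A i k * A k j * B i j else 0)
      = ∑ i : Fin n, ∑ k : Fin n, ∑ j : Fin n,
        if (i < k ∧ k < j) ∧ Xor (i = p ∨ i = q) (j = p ∨ j = q) then
          A i k * A k j * B i j else 0 := by
    simp only [← Finset.sum_add_distrib]
    refine Finset.sum_congr rfl fun i _ => Finset.sum_congr rfl fun k _ =>
      Finset.sum_congr rfl fun j _ => ?_
    by_cases hC : i < k ∧ k < j
    · by_cases h1 : i = p ∨ i = q <;> by_cases h2 : k = p ∨ k = q <;>
        by_cases h3 : j = p ∨ j = q <;>
        simp [Xor, h1, h2, h3, hC, AM_add_self]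
    · simp [hC]
  rw [← comb]
  abel

end CasebR

end Toolkit




/-- `{h^M, {h^M, x}} = {h^M_2, x}` for all `x ∈ A^M`. -/
theorem middle_double_bracket_ham {n : ℕ} [NeZero n] (hn2 : 2 ≤ n) (hnEven : Even n)
    (sL sR : Equiv.Perm (Fin n))
    (hsLne : ∀ i, sL i ≠ i) (hsLinv : ∀ i, sL (sL i) = i)
    (hsRne : ∀ i, sR i ≠ i) (hsRinv : ∀ i, sR (sR i) = i)
    (hvisit : ∀ i : Fin n, ∃ m, pathSeq sL sR m = i)
    (Br : AM n sL sR → AM n sL sR → AM n sL sR)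
    (hBr : IsSFTBracket sL sR Br) :
    ∀ x : AM n sL sR, Br (hamM sL sR) (Br (hamM sL sR) x) = Br (hamM2 sL sR) x := by
  have br_C : ∀ (y : AM n sL sR) (a : ZMod 2), Br y (C a) = 0 := by
    haveI : Fact (Nat.Prime 2) := ⟨Nat.prime_two⟩
    intro y a
    have haa : a * a = a := by
      have h := ZMod.pow_card a
      rwa [pow_two] at h
    have h2 := hBr.2.2.1 y (C a) (C a)
    rw [← map_mul, haa, mul_comm (C a) (Br y (C a)), AM_add_self] at h2
    exact h2
  intro x
  induction x using MvPolynomial.induction_on with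
  | C a => rw [br_C _ a, br_zeror hBr, br_C _ a]
  | add f g hf hg => rw [hBr.2.1, hBr.2.1, hBr.2.1, hf, hg]
  | mul_X f g hf =>
      have key : Br (hamM sL sR) (Br (hamM sL sR) (X g)) = Br (hamM2 sL sR) (X g) := by
        obtain ⟨raw, hval⟩ := g
        cases raw with
        | aL i j =>
            have hv : i < j := hval
            rw [X_aL (sL := sL) (sR := sR) hv]
            exact key_A hBr hv
        | aR i j =>
            have hv : i < j := hval
            rw [X_aR (sL := sL) (sR := sR) hv]
            exact key_B hBr hv
        | bL i j =>
            have hv : i < j ∧ sL i = j := hval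
            rw [X_bL (sL := sL) (sR := sR) hv]
            exact key_bL hBr hv
        | bR i j =>
            have hv : i < j ∧ sR i = j := hval
            rw [X_bR (sL := sL) (sR := sR) hv]
            exact key_bR hBr hv
      rw [hBr.2.2.1, hBr.2.1, hBr.2.2.1, hBr.2.2.1, hBr.2.2.1, hf, key]
      linear_combination AM_add_self (Br (hamM sL sR) f * Br (hamM sL sR) (X g))
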